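/- Let α, α_base ∈ [0,1]. Then the minimum of ηv over all ηv ∈ [0,1] such that there exists β_val ∈ [0,1] with α = α_base·(1-ηv) + β_val·ηv equals η(α_base, α), where η(a,b) = 1 - b/a if b < a, η(a,b) = 1 - (1-b)/(1-a) if b > a, and 0 if a = b (with η(0,b)=1 for b>0 and η(1,b)=1 for b<1). -/

import Mathlib

open Set

noncomputable def eta (a b : ℝ) : ℝ :=
  if a = b then 0
  else if b < a then 1 - b / a
  else 1 - (1 - b) / (1 - a)

theorem eta_is_minimal_mixture_weight (a b : ℝ)
    (ha : a ∈ Set.Icc (0:ℝ) 1) (hb : b ∈ Set.Icc (0:ℝ) 1) :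
    IsLeast {η : ℝ | η ∈ Set.Icc (0:ℝ) 1 ∧
      ∃ c ∈ Set.Icc (0:ℝ) 1, b = (1 - η) * a + η * c} (eta a b) := by
  obtain ⟨ha0, ha1⟩ := ha
  obtain ⟨hb0, hb1⟩ := hb
  unfold eta
  constructor
  · split_ifs with h1 h2
    · exact ⟨⟨le_refl 0, zero_le_one⟩, 0, ⟨le_refl 0, zero_le_one⟩, by simp [h1]⟩
    · have ha' : 0 < a := lt_of_le_of_lt hb0 h2
      have hba : b / a ≤ 1 := (div_le_one ha').mpr h2.le
      have hba0 : 0 ≤ b / a := div_nonneg hb0 ha'.le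
      refine ⟨⟨by linarith, by linarith⟩, 0, ⟨le_refl 0, zero_le_one⟩, ?_⟩
      field_simp
      ring
    · have hab : a < b := lt_of_le_of_ne (not_lt.mp h2) h1
      have ha'' : a < 1 := lt_of_lt_of_le hab hb1
      have h1a : 0 < 1 - a := by linarith
      have h01 : (1 - b) / (1 - a) ≤ 1 := (div_le_one h1a).mpr (by linarith)
      have h00 : 0 ≤ (1 - b) / (1 - a) := div_nonneg (by linarith) h1a.le
      refine ⟨⟨by linarith, by linarith⟩, 1, ⟨zero_le_one, le_refl 1⟩, ?_⟩
      field_simp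
      ring
  · rintro η ⟨⟨hη0, hη1⟩, c, ⟨hc0, hc1⟩, heq⟩
    split_ifs with h1 h2
    · exact hη0
    · have ha' : 0 < a := lt_of_le_of_lt hb0 h2
      have key : (1 - η) * a ≤ b := by nlinarith [mul_nonneg hη0 hc0]
      have : 1 - η ≤ b / a := (le_div_iff₀ ha').mpr key
      linarith
    · have hab : a < b := lt_of_le_of_ne (not_lt.mp h2) h1
      have h1a : 0 < 1 - a := by linarith [lt_of_lt_of_le hab hb1]
      have key : b - a ≤ η * (1 - a) := by nlinarith [mul_le_mul_of_nonneg_left hc1 hη0]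
      have h2' : (b - a) / (1 - a) ≤ η := (div_le_iff₀ h1a).mpr key
      have heq2 : 1 - (1 - b) / (1 - a) = (b - a) / (1 - a) := by field_simp; ring
      linarith [heq2 ▸ h2']
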